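/- Let (V, ≤) be a linear order and (V, ⪯) a well-order, and let ⊑ be the tree order of T(V, ≤, ⪯). Then every two elements a, b ∈ V have a meet a ∧ b in (V, ⊑): the set of common ⊑-lower bounds of a and b is nonempty and has a ⊑-maximum. -/
import Mathlib


universe u

/-- `c` is strictly `le`-between `a` and `b`. -/
def strictlyBetween {α : Type u} (le : α → α → Prop) (a c b : α) : Prop :=
  (le a c ∧ le c b ∧ c ≠ a ∧ c ≠ b) ∨ (le b c ∧ le c a ∧ c ≠ a ∧ c ≠ b)

/-- The tree relation `⊑` of `T(V, ≤, ⪯)`: `a ⊑ b` iff `a ⪯ b` and there is no `c`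
strictly `≤`-between `a` and `b` with `c ⪯ a` and `c ⪯ b`. -/
def treeRel {α : Type u} (le pre : α → α → Prop) (a b : α) : Prop :=
  pre a b ∧ ¬∃ c, strictlyBetween le a c b ∧ pre c a ∧ pre c b

/-- `s` is well-ordered by `r` (`r` is a reflexive `≤`-style relation):
`r` is total on `s` and every nonempty subset of `s` has an `r`-least element. -/
def IsWellOrderedOn {α : Type u} (r : α → α → Prop) (s : Set α) : Prop :=
  (∀ a ∈ s, ∀ b ∈ s, r a b ∨ r b a) ∧
  ∀ t : Set α, t ⊆ s → t.Nonempty → ∃ m ∈ t, ∀ x ∈ t, r m x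

/-- `r` is a (set-theoretic, rooted) tree order: a partial order with a minimum element
in which the set of predecessors of every element is well-ordered. -/
def IsTreeOrder {α : Type u} (r : α → α → Prop) : Prop :=
  IsPartialOrder α r ∧ (∃ root, ∀ a, r root a) ∧
  ∀ a, IsWellOrderedOn r {b | r b a}

/-- `a` is a leaf of the tree order `r`: it has no strict successor. -/
def isLeaf {α : Type u} (r : α → α → Prop) (a : α) : Prop := ∀ b, r a b → b = a

/-- `b` is a son (immediate successor) of `a` in the tree order `r`. -/
def isSon {α : Type u} (r : α → α → Prop) (a b : α) : Prop :=
  r a b ∧ a ≠ b ∧ ∀ c, r a c → r c b → c = a ∨ c = b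

/-- `a` has exactly two sons in the tree order `r`. -/
def hasTwoSons {α : Type u} (r : α → α → Prop) (a : α) : Prop :=
  ∃ b c, b ≠ c ∧ isSon r a b ∧ isSon r a c ∧ ∀ d, isSon r a d → d = b ∨ d = c

/-- `(le, pre)` is a compatible pair of orders: `le` is a linear order, `pre` a preorder,
`T(V, le, pre)` is defined (i.e. `treeRel le pre` is a tree order), and every element
is either a leaf or has exactly two sons. -/
def CompatPair {α : Type u} (le pre : α → α → Prop) : Prop :=
  IsLinearOrder α le ∧ IsPreorder α pre ∧ IsTreeOrder (treeRel le pre) ∧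
  ∀ a, isLeaf (treeRel le pre) a ∨ hasTwoSons (treeRel le pre) a

/-- `m` is the meet of `a` and `b` in the tree order `r`. -/
def isMeet {α : Type u} (r : α → α → Prop) (a b m : α) : Prop :=
  r m a ∧ r m b ∧ ∀ x, r x a → r x b → r x m

/-- `C` is closed under the meet operation of the tree order `r`. -/
def MeetClosed {α : Type u} (r : α → α → Prop) (C : Set α) : Prop :=
  ∀ a ∈ C, ∀ b ∈ C, ∀ m, isMeet r a b m → m ∈ C

/-- The closed `le`-interval with endpoints `a` and `b` (as a predicate on `c`). -/
def Ivl {α : Type u} (le : α → α → Prop) (a b c : α) : Prop :=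
  (le a c ∧ le c b) ∨ (le b c ∧ le c a)

lemma ivl_symm {α : Type u} (le : α → α → Prop) {a b c : α}
    (h : Ivl le a b c) : Ivl le b a c := h.symm

lemma ivl_self {α : Type u} (le : α → α → Prop) (hle : IsLinearOrder α le)
    (a b : α) : Ivl le a b a := by
  rcases hle.total a b with h | h
  · exact Or.inl ⟨hle.refl a, h⟩
  · exact Or.inr ⟨h, hle.refl a⟩

lemma ivl_right {α : Type u} (le : α → α → Prop) (hle : IsLinearOrder α le)
    (a b : α) : Ivl le a b b := by
  rcases hle.total a b with h | h
  · exact Or.inl ⟨h, hle.refl b⟩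
  · exact Or.inr ⟨hle.refl b, h⟩

/-- Triangle: the interval `[a,b]` is covered by `[a,x] ∪ [x,b]` for any `x`. -/
lemma ivl_triangle {α : Type u} (le : α → α → Prop) (hle : IsLinearOrder α le)
    (x : α) {a b c : α} (h : Ivl le a b c) : Ivl le a x c ∨ Ivl le x b c := by
  rcases h with ⟨h1, h2⟩ | ⟨h1, h2⟩
  · rcases hle.total c x with hx | hx
    · exact Or.inl (Or.inl ⟨h1, hx⟩)
    · exact Or.inr (Or.inl ⟨hx, h2⟩)
  · rcases hle.total c x with hx | hx
    · exact Or.inr (Or.inr ⟨h1, hx⟩)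
    · exact Or.inl (Or.inr ⟨hx, h2⟩)

/-- If `m ∈ [a,b]` then `[a,m] ⊆ [a,b]`. -/
lemma ivl_sub {α : Type u} (le : α → α → Prop) (hle : IsLinearOrder α le)
    {a b m c : α} (hm : Ivl le a b m) (hc : Ivl le a m c) : Ivl le a b c := by
  rcases hm with ⟨hm1, hm2⟩ | ⟨hm1, hm2⟩
  · rcases hc with ⟨hc1, hc2⟩ | ⟨hc1, hc2⟩
    · exact Or.inl ⟨hc1, hle.trans _ _ _ hc2 hm2⟩
    · have : c = m := hle.antisymm _ _ (hle.trans _ _ _ hc2 hm1) hc1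
      exact this ▸ Or.inl ⟨hm1, hm2⟩
  · rcases hc with ⟨hc1, hc2⟩ | ⟨hc1, hc2⟩
    · have : c = a := hle.antisymm _ _ (hle.trans _ _ _ hc2 hm2) hc1
      exact this ▸ ivl_self le hle a b
    · exact Or.inr ⟨hle.trans _ _ _ hm1 hc1, hc2⟩

/-- `treeRel` characterization: `a ⊑ b` iff `a ⪯ b` and `a` is `⪯`-least on `[a,b]`. -/
lemma treeRel_iff_aux {α : Type u} (le pre : α → α → Prop)
    (hle : IsLinearOrder α le) (hpre : IsLinearOrder α pre) (a b : α) :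
    treeRel le pre a b ↔ pre a b ∧ ∀ c, Ivl le a b c → pre a c := by
  constructor
  · rintro ⟨hab, hno⟩
    refine ⟨hab, fun c hc => ?_⟩
    by_cases hca : c = a
    · exact hca ▸ hpre.refl c
    by_cases hcb : c = b
    · exact hcb ▸ hab
    by_contra hnac
    have hca' : pre c a := (hpre.total c a).resolve_right hnac
    refine hno ⟨c, ?_, hca', hpre.trans _ _ _ hca' hab⟩
    rcases hc with ⟨h1, h2⟩ | ⟨h1, h2⟩
    · exact Or.inl ⟨h1, h2, hca, hcb⟩
    · exact Or.inr ⟨h1, h2, hca, hcb⟩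
  · rintro ⟨hab, h⟩
    refine ⟨hab, ?_⟩
    rintro ⟨c, hsb, hca, hcb⟩
    have hIvl : Ivl le a b c := by
      rcases hsb with ⟨h1, h2, _, _⟩ | ⟨h1, h2, _, _⟩
      · exact Or.inl ⟨h1, h2⟩
      · exact Or.inr ⟨h1, h2⟩
    have hne : c ≠ a := by
      rcases hsb with ⟨_, _, hne, _⟩ | ⟨_, _, hne, _⟩ <;> exact hne
    exact hne (hpre.antisymm _ _ hca (h c hIvl))

/-- For a linear order `(V, ≤)` and a well-order `(V, ⪯)`, every two elements of the tree
`T(V, ≤, ⪯)` have a meet: the set of common `⊑`-lower bounds is nonempty and has a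
`⊑`-maximum. -/
theorem treeRel_meets_exist {V : Type u} (le pre : V → V → Prop)
    (hle : IsLinearOrder V le) (hpre : IsLinearOrder V pre)
    (hwo : ∀ s : Set V, s.Nonempty → ∃ m ∈ s, ∀ x ∈ s, pre m x) :
    ∀ a b : V, ∃ m : V, isMeet (treeRel le pre) a b m := by
  intro a b
  obtain ⟨m, hmS, hmin⟩ := hwo {c | Ivl le a b c} ⟨a, ivl_self le hle a b⟩
  have hma : treeRel le pre m a := by
    rw [treeRel_iff_aux le pre hle hpre]
    exact ⟨hmin a (ivl_self le hle a b),
      fun c hc => hmin c (ivl_sub le hle hmS (ivl_symm le hc))⟩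
  have hmb : treeRel le pre m b := by
    rw [treeRel_iff_aux le pre hle hpre]
    refine ⟨hmin b (ivl_right le hle a b), fun c hc => hmin c ?_⟩
    exact ivl_symm le (ivl_sub le hle (ivl_symm le hmS) (ivl_symm le hc))
  refine ⟨m, hma, hmb, fun x hxa hxb => ?_⟩
  rw [treeRel_iff_aux le pre hle hpre] at hxa hxb ⊢
  obtain ⟨hxpa, hIa⟩ := hxa
  obtain ⟨hxpb, hIb⟩ := hxb
  have hxm : pre x m := by
    rcases ivl_triangle le hle x hmS with h | h
    · exact hIa m (ivl_symm le h)
    · exact hIb m h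
  refine ⟨hxm, fun c hc => ?_⟩
  rcases ivl_triangle le hle a hc with h | h
  · exact hIa c h
  · exact hpre.trans _ _ _ hxm (hmin c (ivl_sub le hle hmS h))
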